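/- Let ω be a random vector with density p (the spectral density of a real-valued shift-invariant kernel k(x,y)=h(x−y)) and b ∼ Uniform(0, 2π) independent of ω. Define z(x) = √2 cos(ω·x + b). Then E[z(x) z(y)] = k(x,y) for all x, y ∈ ℝ^p. -/

import Mathlib

open MeasureTheory

lemma cos_integral_aux (d : ℝ) :
    ∫ b in (0:ℝ)..(2 * Real.pi), Real.cos (d + 2 * b) = 0 := by
  have hderiv : ∀ b ∈ Set.uIcc (0:ℝ) (2 * Real.pi),
      HasDerivAt (fun b => Real.sin (d + 2 * b) / 2) (Real.cos (d + 2 * b)) b := by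
    intro b _
    have h1 : HasDerivAt (fun b : ℝ => d + 2 * b) 2 b := by
      simpa using ((hasDerivAt_id b).const_mul 2).const_add d
    have h2 := (Real.hasDerivAt_sin (d + 2 * b)).comp b h1
    have h3 := h2.div_const 2
    simpa [mul_comm, mul_div_assoc] using h3
  have hint : IntervalIntegrable (fun b => Real.cos (d + 2 * b)) volume 0 (2 * Real.pi) :=
    (Real.continuous_cos.comp (by continuity)).intervalIntegrable _ _
  rw [intervalIntegral.integral_eq_sub_of_hasDerivAt hderiv hint]
  have : d + 2 * (2 * Real.pi) = (d + 2 * Real.pi) + 2 * Real.pi := by ring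
  rw [this, Real.sin_add_two_pi, Real.sin_add_two_pi]
  simp

lemma inner_integral (a c : ℝ) :
    (1 / (2 * Real.pi)) * ∫ b in (0:ℝ)..(2 * Real.pi),
      (Real.sqrt 2 * Real.cos (a + b)) * (Real.sqrt 2 * Real.cos (c + b))
      = Real.cos (a - c) := by
  have hfun : ∀ b : ℝ, (Real.sqrt 2 * Real.cos (a + b)) * (Real.sqrt 2 * Real.cos (c + b))
      = Real.cos (a - c) + Real.cos ((a + c) + 2 * b) := by
    intro b
    have hs : Real.sqrt 2 * Real.sqrt 2 = 2 := Real.mul_self_sqrt (by norm_num)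
    have key : ∀ X Y : ℝ, 2 * (Real.cos X * Real.cos Y) = Real.cos (X - Y) + Real.cos (X + Y) := by
      intro X Y; rw [Real.cos_sub, Real.cos_add]; ring
    have this1 : (Real.sqrt 2 * Real.cos (a + b)) * (Real.sqrt 2 * Real.cos (c + b))
        = 2 * (Real.cos (a + b) * Real.cos (c + b)) := by
      linear_combination (Real.cos (a + b) * Real.cos (c + b)) * hs
    have h1 : a - c = (a + b) - (c + b) := by ring
    have h2 : (a + c) + 2 * b = (a + b) + (c + b) := by ring
    rw [this1, h1, h2]; exact key _ _
  rw [intervalIntegral.integral_congr (g := fun b =>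
      Real.cos (a - c) + Real.cos ((a + c) + 2 * b)) (fun b _ => hfun b)]
  rw [intervalIntegral.integral_add (intervalIntegrable_const)
      ((by continuity : Continuous fun b : ℝ => Real.cos ((a + c) + 2 * b)).intervalIntegrable _ _)]
  rw [cos_integral_aux, intervalIntegral.integral_const]
  have hpi : Real.pi ≠ 0 := Real.pi_ne_zero
  field_simp
  rw [sub_zero, smul_eq_mul, add_zero]

/-- For `z(x) = √2 cos(ω·x + b)` with `ω` drawn from the spectral density `ρ` and
`b ∼ Uniform(0, 2π)` independent of `ω`, one has `E[z(x) z(y)] = k(x,y)`. -/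
theorem stmt2 {p : ℕ} (k : (Fin p → ℝ) → (Fin p → ℝ) → ℝ) (h : (Fin p → ℝ) → ℝ)
    (ρ : (Fin p → ℝ) → ℝ)
    (hshift : ∀ x y, k x y = h (x - y))
    (hcont : Continuous h) (hbdd : ∃ M, ∀ u, |h u| ≤ M)
    (hρ_nonneg : ∀ ω, 0 ≤ ρ ω) (hρ_int : Integrable ρ)
    (hρ_prob : ∫ ω : Fin p → ℝ, ρ ω = 1)
    (hspec : ∀ u, h u = ∫ ω : Fin p → ℝ, Real.cos (∑ i, ω i * u i) * ρ ω) :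
    ∀ x y, (∫ ω : Fin p → ℝ,
        ((1 / (2 * Real.pi)) * ∫ b in (0:ℝ)..(2 * Real.pi),
          (Real.sqrt 2 * Real.cos ((∑ i, ω i * x i) + b)) *
            (Real.sqrt 2 * Real.cos ((∑ i, ω i * y i) + b))) * ρ ω) = k x y := by
  intro x y
  have hpt : ∀ ω : Fin p → ℝ,
      ((1 / (2 * Real.pi)) * ∫ b in (0:ℝ)..(2 * Real.pi),
          (Real.sqrt 2 * Real.cos ((∑ i, ω i * x i) + b)) *
            (Real.sqrt 2 * Real.cos ((∑ i, ω i * y i) + b))) * ρ ω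
        = Real.cos (∑ i, ω i * (x - y) i) * ρ ω := by
    intro ω
    rw [inner_integral]
    congr 2
    rw [← Finset.sum_sub_distrib]
    apply Finset.sum_congr rfl
    intro i _
    simp [Pi.sub_apply, mul_sub]
  rw [show (fun ω : Fin p → ℝ =>
      ((1 / (2 * Real.pi)) * ∫ b in (0:ℝ)..(2 * Real.pi),
          (Real.sqrt 2 * Real.cos ((∑ i, ω i * x i) + b)) *
            (Real.sqrt 2 * Real.cos ((∑ i, ω i * y i) + b))) * ρ ω)
      = fun ω => Real.cos (∑ i, ω i * (x - y) i) * ρ ω from funext hpt]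
  rw [← hspec, ← hshift]
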